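/- Let (g,J) be a quasi-Kähler Chern-flat Lie algebra and let L : g → g be a linear map satisfying LJ = -JL and L[X,Y] = -[LX,Y] = -[X,LY] for all X,Y ∈ g. Then L vanishes on the derived algebra [g,g] and L(g) is contained in the center of g. -/

import Mathlib

/-- Let `(g, J)` be a quasi-Kähler Chern-flat Lie algebra and `L : g → g` a
linear map satisfying `LJ = -JL` and `L[X,Y] = -[LX,Y] = -[X,LY]` (an
infinitesimal deformation of `J`).  Then `L` vanishes on the derived algebra
`[g,g]` and its image lies in the center of `g`. -/
theorem deformation_kills_derived_and_lands_in_center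
    (g : Type*) [LieRing g] [LieAlgebra ℝ g] [FiniteDimensional ℝ g]
    (J : g →ₗ[ℝ] g) (hJ : ∀ X : g, J (J X) = -X)
    (h1 : ∀ X Y : g, J ⁅X, Y⁆ = -⁅J X, Y⁆)
    (h2 : ∀ X Y : g, J ⁅X, Y⁆ = -⁅X, J Y⁆)
    (L : g →ₗ[ℝ] g)
    (hLJ : ∀ X : g, L (J X) = -J (L X))
    (hL1 : ∀ X Y : g, L ⁅X, Y⁆ = -⁅L X, Y⁆)
    (hL2 : ∀ X Y : g, L ⁅X, Y⁆ = -⁅X, L Y⁆) :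
    (∀ X Y : g, L ⁅X, Y⁆ = 0) ∧ (∀ X : g, L X ∈ LieAlgebra.center ℝ g) := by
  -- Key: ⁅J X, J Y⁆ = -⁅X, Y⁆
  have hJJ : ∀ X Y : g, ⁅J X, J Y⁆ = -⁅X, Y⁆ := by
    intro X Y
    have a : J ⁅J X, Y⁆ = ⁅X, Y⁆ := by rw [h1, hJ, neg_lie, neg_neg]
    have b := h2 (J X) Y
    rw [a] at b
    rw [b, neg_neg]
  -- ⁅L X, Y⁆ = 0
  have key : ∀ X Y : g, ⁅L X, Y⁆ = 0 := by
    intro X Y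
    have c : L ⁅X, Y⁆ = ⁅L X, Y⁆ := by
      calc L ⁅X, Y⁆ = L (-⁅J X, J Y⁆) := by rw [hJJ]; rw [neg_neg]
        _ = -L ⁅J X, J Y⁆ := by rw [map_neg]
        _ = ⁅L (J X), J Y⁆ := by rw [hL1]; rw [neg_neg]
        _ = ⁅-J (L X), J Y⁆ := by rw [hLJ]
        _ = -⁅J (L X), J Y⁆ := by rw [neg_lie]
        _ = ⁅L X, Y⁆ := by rw [hJJ, neg_neg]
    have d : L ⁅X, Y⁆ = -⁅L X, Y⁆ := hL1 X Y
    have e : ⁅L X, Y⁆ = -⁅L X, Y⁆ := c.symm.trans d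
    have h2x : (2 : ℝ) • ⁅L X, Y⁆ = 0 := by
      rw [two_smul]
      nth_rewrite 2 [e]
      rw [add_neg_cancel]
    rcases smul_eq_zero.mp h2x with h | h
    · norm_num at h
    · exact h
  refine ⟨fun X Y => by rw [hL1, key, neg_zero], fun X => ?_⟩
  rw [LieModule.mem_maxTrivSubmodule]
  intro Y
  rw [← lie_skew, key, neg_zero]
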